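/- For any 1 ≤ i < j ≤ n, the answer to RMQ(i,j) is the unique index k in [i,j] that is not the answer to any second-minimum query R2M(i',j') with i ≤ i' < j' ≤ j. -/

import Mathlib

inductive BT where
  | leaf : BT
  | node : BT → BT → BT
deriving DecidableEq

namespace BT

/-- Number of nodes. -/
def size : BT → ℕ
  | leaf => 0
  | node l r => l.size + r.size + 1

/-- Inorder list of node positions (paths from the root; `false` = left step). -/
def inList : BT → List (List Bool)
  | leaf => []
  | node l r => (l.inList).map (List.cons false) ++ [] :: (r.inList).map (List.cons true)

/-- Preorder list of node positions. -/
def preList : BT → List (List Bool)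
  | leaf => []
  | node l r => [] :: ((l.preList).map (List.cons false) ++ (r.preList).map (List.cons true))

/-- Subtree rooted at a given position, if the position is valid. -/
def subtree? : BT → List Bool → Option BT
  | t, [] => some t
  | leaf, _ :: _ => none
  | node l r, b :: p => if b then r.subtree? p else l.subtree? p

/-- Size of the left spine (maximal path following left children, top node included). -/
def Lspine : BT → ℕ
  | leaf => 0
  | node l _ => l.Lspine + 1

/-- Size of the right spine. -/
def Rspine : BT → ℕ
  | leaf => 0
  | node _ r => r.Rspine + 1

/-- Size of the left inner spine of the root: right spine of the left child. -/
def lv : BT → ℕ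
  | leaf => 0
  | node l _ => l.Rspine

/-- Size of the right inner spine of the root: left spine of the right child. -/
def rv : BT → ℕ
  | leaf => 0
  | node _ r => r.Lspine

/-- Sum of `f` over all (sub)trees rooted at nodes of the tree. -/
def sumNodes (f : BT → ℕ) : BT → ℕ
  | leaf => 0
  | node l r => f (node l r) + sumNodes f l + sumNodes f r

/-- Number of leaf nodes (nodes with no children). -/
def leaves : BT → ℕ
  | leaf => 0
  | node leaf leaf => 1
  | node l r => leaves l + leaves r

end BT

/-- Longest common prefix of two paths: the LCA of two positions in a binary tree. -/
def lcp : List Bool → List Bool → List Bool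
  | a :: p, b :: q => if a = b then a :: lcp p q else []
  | _, _ => []

/-- Index of the minimum element of a list (0 if empty). -/
def minIdx {α : Type*} [LinearOrder α] (l : List α) : ℕ :=
  match l.argmin id with
  | none => 0
  | some a => l.idxOf a

/-- Cartesian tree construction with fuel. -/
def cartesianAux {α : Type*} [LinearOrder α] : ℕ → List α → BT
  | 0, _ => .leaf
  | _ + 1, [] => .leaf
  | n + 1, l@(_ :: _) =>
      .node (cartesianAux n (l.take (minIdx l))) (cartesianAux n (l.drop (minIdx l + 1)))

/-- The Cartesian tree of a list: root at the position of the minimum,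
recursively built on the prefix before and the suffix after the minimum. -/
def cartesian {α : Type*} [LinearOrder α] (l : List α) : BT :=
  cartesianAux l.length l

/-- `k` is the position of the minimum of `A` on the range `[i, j]`. -/
def isArgmin {α : Type*} [LinearOrder α] {n : ℕ} (A : Fin n → α) (i j k : Fin n) : Prop :=
  i ≤ k ∧ k ≤ j ∧ ∀ m, i ≤ m → m ≤ j → A k ≤ A m

/-- `k` is the position of the second smallest element of `A` on the range `[i, j]`. -/
def isSecondMin {α : Type*} [LinearOrder α] {n : ℕ} (A : Fin n → α) (i j k : Fin n) : Prop :=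
  i ≤ k ∧ k ≤ j ∧
    ∃ m, isArgmin A i j m ∧ k ≠ m ∧ ∀ l, i ≤ l → l ≤ j → l ≠ m → A k ≤ A l

/-- The node with inorder number `i` in `t` has a left child. -/
def hasLeftChildAt (t : BT) (i : ℕ) : Prop :=
  ∃ (p : List Bool) (ll lr r : BT),
    t.inList[i]? = some p ∧ t.subtree? p = some (.node (.node ll lr) r)

/-- For `i < j`, `RMQ(i,j)` is the unique index `k ∈ [i,j]` that is not the answer to any
second-minimum query `R2M(i',j')` with `i ≤ i' < j' ≤ j`. -/
theorem stmt10 {α : Type*} [LinearOrder α] {n : ℕ} (A : Fin n → α)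
    (hA : Function.Injective A) (i j : Fin n) (hij : i < j)
    (k : Fin n) (hk1 : i ≤ k) (hk2 : k ≤ j) :
    isArgmin A i j k ↔
      ∀ i' j' : Fin n, i ≤ i' → i' < j' → j' ≤ j → ¬ isSecondMin A i' j' k := by
  constructor
  · rintro ⟨-, -, hmin⟩ i' j' hii' hij' hjj' ⟨hi'k, hkj', m, hm, hkm, -⟩
    have h1 : A k ≤ A m := hmin m (le_trans hii' hm.1) (le_trans hm.2.1 hjj')
    have h2 : A m ≤ A k := hm.2.2 k hi'k hkj'
    exact hkm (hA (le_antisymm h1 h2))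
  · intro h
    refine ⟨hk1, hk2, ?_⟩
    by_contra hmin
    push_neg at hmin
    obtain ⟨m0, hm0i, hm0j, hm0⟩ := hmin
    set T : Finset (Fin n) := Finset.univ.filter (fun l => i ≤ l ∧ l ≤ j ∧ A l < A k) with hT
    have hTne : T.Nonempty := ⟨m0, by simp [hT, hm0i, hm0j, hm0]⟩
    obtain ⟨m, hmT, hmmin⟩ := T.exists_min_image (fun l => Nat.dist l.val k.val) hTne
    simp only [hT, Finset.mem_filter, Finset.mem_univ, true_and] at hmT
    obtain ⟨hmi, hmj, hmk⟩ := hmT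
    have hmk' : m ≠ k := fun e => absurd (e ▸ hmk) (lt_irrefl _)
    have hdist : ∀ l : Fin n, min m k ≤ l → l ≤ max m k → A l < A k → l = m := by
      intro l hl1 hl2 hlk
      have hli : i ≤ l := le_trans (le_min hmi hk1) hl1
      have hlj : l ≤ j := le_trans hl2 (max_le hmj hk2)
      have := hmmin l (by simp [hT, hli, hlj, hlk])
      simp only [Nat.dist] at this
      apply Fin.ext
      rcases le_total m k with h' | h' <;>
        [(rw [min_eq_left h'] at hl1; rw [max_eq_right h'] at hl2);
         (rw [min_eq_right h'] at hl1; rw [max_eq_left h'] at hl2)] <;>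
        rw [Fin.le_def] at hl1 hl2 <;> omega
    have hminmax : min m k < max m k := by
      rcases lt_or_gt_of_ne hmk' with h' | h'
      · simpa [min_eq_left h'.le, max_eq_right h'.le] using h'
      · simpa [min_eq_right h'.le, max_eq_left h'.le] using h'
    refine h (min m k) (max m k) (le_min hmi hk1) hminmax (max_le hmj hk2)
      ⟨min_le_right m k, le_max_right m k, m, ⟨min_le_left m k, le_max_left m k, ?_⟩,
        fun e => hmk' e.symm, ?_⟩
    · intro l hl1 hl2
      by_cases hlm : l = m
      · simp [hlm]
      · have : ¬ A l < A k := fun hc => hlm (hdist l hl1 hl2 hc)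
        exact le_trans hmk.le (not_lt.mp this)
    · intro l hl1 hl2 hlm
      have : ¬ A l < A k := fun hc => hlm (hdist l hl1 hl2 hc)
      exact not_lt.mp this
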